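/- If v: ℝ^n → ℝ is twice continuously differentiable and satisfies the nonlinear PDE 0 = q + v_x'f - (1/2)v_x' G R^{-1} G' v_x + (1/2)tr(v_xx BB'), and λ > 0 satisfies λ G(x)R(x)^{-1}G(x)' = B(x)B(x)' for all x, then the desirability function ψ(x) = exp(-v(x)/λ) satisfies the linear PDE 0 = -(1/λ)q(x)ψ + f(x)'ψ_x + (1/2)tr(ψ_xx B(x)B(x)'). -/

import Mathlib

open Matrix

/-- If `v` is C² and satisfies the nonlinear HJB PDE, and `λ > 0` satisfies the
compatibility condition `λ G R⁻¹ G' = BB'`, then the desirability function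
`ψ = exp(-v/λ)` satisfies the linear PDE
`0 = -(1/λ) q ψ + f'ψₓ + (1/2) tr(ψ_xx BB')`. -/
theorem desirability_linear_pde {n m : ℕ}
    (q : (Fin n → ℝ) → ℝ) (f : (Fin n → ℝ) → (Fin n → ℝ))
    (G B : (Fin n → ℝ) → Matrix (Fin n) (Fin m) ℝ)
    (R : (Fin n → ℝ) → Matrix (Fin m) (Fin m) ℝ)
    (hRsymm : ∀ x, (R x).IsSymm) (hRpd : ∀ x, (R x).PosDef)
    (lam : ℝ) (hlam : 0 < lam)
    (hcompat : ∀ x, lam • (G x * (R x)⁻¹ * (G x)ᵀ) = B x * (B x)ᵀ)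
    (v : (Fin n → ℝ) → ℝ) (hv : ContDiff ℝ 2 v)
    (vx : (Fin n → ℝ) → (Fin n → ℝ))
    (vxx : (Fin n → ℝ) → Matrix (Fin n) (Fin n) ℝ)
    (hvx : ∀ x i, vx x i = fderiv ℝ v x (Pi.single i 1))
    (hvxx : ∀ x i j, vxx x i j =
      fderiv ℝ (fun y => fderiv ℝ v y (Pi.single j 1)) x (Pi.single i 1))
    (hPDE : ∀ x, 0 = q x + vx x ⬝ᵥ f x
        - (1/2) * (vx x ⬝ᵥ ((G x * (R x)⁻¹ * (G x)ᵀ) *ᵥ vx x))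
        + (1/2) * Matrix.trace (vxx x * (B x * (B x)ᵀ)))
    (ψ : (Fin n → ℝ) → ℝ) (hψ : ψ = fun x => Real.exp (-(v x)/lam))
    (ψx : (Fin n → ℝ) → (Fin n → ℝ))
    (ψxx : (Fin n → ℝ) → Matrix (Fin n) (Fin n) ℝ)
    (hψx : ∀ x i, ψx x i = fderiv ℝ ψ x (Pi.single i 1))
    (hψxx : ∀ x i j, ψxx x i j =
      fderiv ℝ (fun y => fderiv ℝ ψ y (Pi.single j 1)) x (Pi.single i 1)) :
    ∀ x, 0 = -(1/lam) * q x * ψ x + f x ⬝ᵥ ψx x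
        + (1/2) * Matrix.trace (ψxx x * (B x * (B x)ᵀ)) := by
  have hvd : Differentiable ℝ v := hv.differentiable (by norm_num)
  -- u = -(v)/lam rewritten as const mul
  have hueq : (fun y : Fin n → ℝ => -(v y)/lam) = fun y => (-(1/lam)) * v y := by
    funext y; ring
  -- fderiv of ψ
  have hψder : ∀ x, HasFDerivAt ψ ((Real.exp (-(v x)/lam) * (-(1/lam))) • fderiv ℝ v x) x := by
    intro x
    have h1 : HasFDerivAt (fun y : Fin n → ℝ => -(v y)/lam) ((-(1/lam)) • fderiv ℝ v x) x := by
      rw [hueq]; exact (hvd x).hasFDerivAt.const_mul _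
    have h2 := h1.exp
    rw [hψ]
    rw [smul_smul] at h2
    exact h2
  have hψd : Differentiable ℝ ψ := fun x => (hψder x).differentiableAt
  have hψval : ∀ x, ψ x = Real.exp (-(v x)/lam) := fun x => by rw [hψ]
  -- ψx formula
  have hψxf : ∀ x i, ψx x i = -(1/lam) * ψ x * vx x i := by
    intro x i
    rw [hψx, (hψder x).fderiv, hvx, hψval]
    simp [mul_comm, mul_assoc, mul_left_comm]
  -- differentiability of w_j
  have hfd1 : ContDiff ℝ 1 (fderiv ℝ v) := hv.fderiv_right (by norm_num)
  have hw : ∀ j, Differentiable ℝ (fun y => fderiv ℝ v y (Pi.single j 1)) := by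
    intro j
    exact (ContinuousLinearMap.apply ℝ ℝ (Pi.single j 1)).differentiable.comp
      (hfd1.differentiable (by norm_num))
  -- ψxx formula
  have hψxxf : ∀ x i j, ψxx x i j = (1/lam^2) * ψ x * vx x i * vx x j
      - (1/lam) * ψ x * vxx x i j := by
    intro x i j
    have hg : (fun y => fderiv ℝ ψ y (Pi.single j 1))
        = fun y => (-(1/lam)) * (ψ y * fderiv ℝ v y (Pi.single j 1)) := by
      funext y
      rw [(hψder y).fderiv]
      simp [← hψval]
      ring
    have e1 : fderiv ℝ (fun y => fderiv ℝ v y (Pi.single j 1)) x (Pi.single i 1)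
        = vxx x i j := (hvxx x i j).symm
    have e2 : fderiv ℝ ψ x (Pi.single i 1) = ψx x i := (hψx x i).symm
    rw [hψxx, hg, fderiv_const_mul (a := fun y => ψ y * fderiv ℝ v y (Pi.single j 1)) ((hψd x).mul (hw j x)) _,
      fderiv_fun_mul (hψd x) (hw j x)]
    simp only [ContinuousLinearMap.coe_smul', Pi.smul_apply,
      ContinuousLinearMap.add_apply, smul_eq_mul, e1, e2]
    rw [← hvx x j, hψxf x i]
    ring
  -- matrix form of ψxx
  have hl : lam ≠ 0 := ne_of_gt hlam
  intro x
  have hψxxM : ψxx x = ((1/lam^2) * ψ x) • vecMulVec (vx x) (vx x)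
      + (-(1/lam) * ψ x) • vxx x := by
    ext i j
    simp [hψxxf, vecMulVec_apply]
    ring
  have htr0 : Matrix.trace (vecMulVec (vx x) (vx x) * (B x * (B x)ᵀ))
      = vx x ⬝ᵥ ((B x * (B x)ᵀ) *ᵥ vx x) := by
    simp only [Matrix.trace, Matrix.diag, Matrix.mul_apply, vecMulVec_apply,
      dotProduct, mulVec]
    rw [Finset.sum_comm]
    apply Finset.sum_congr rfl
    intro i _
    rw [Finset.mul_sum]
    apply Finset.sum_congr rfl
    intro j _
    ring
  have hMv : vx x ⬝ᵥ ((B x * (B x)ᵀ) *ᵥ vx x)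
      = lam * (vx x ⬝ᵥ ((G x * (R x)⁻¹ * (G x)ᵀ) *ᵥ vx x)) := by
    rw [← hcompat x, smul_mulVec, dotProduct_smul, smul_eq_mul]
  have htr : Matrix.trace (ψxx x * (B x * (B x)ᵀ))
      = (1/lam) * ψ x * (vx x ⬝ᵥ ((G x * (R x)⁻¹ * (G x)ᵀ) *ᵥ vx x))
        - (1/lam) * ψ x * Matrix.trace (vxx x * (B x * (B x)ᵀ)) := by
    rw [hψxxM, Matrix.add_mul, Matrix.smul_mul, Matrix.smul_mul, Matrix.trace_add,
      Matrix.trace_smul, Matrix.trace_smul, htr0, hMv, smul_eq_mul, smul_eq_mul]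
    field_simp
    ring
  have hdot : f x ⬝ᵥ ψx x = -(1/lam) * ψ x * (vx x ⬝ᵥ f x) := by
    simp only [dotProduct, hψxf]
    rw [Finset.mul_sum]
    apply Finset.sum_congr rfl
    intro i _
    ring
  rw [htr, hdot]
  linear_combination (-(1/lam) * ψ x) * hPDE x
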